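/- There is no classical (2,1,p) random access encoding for any p > 1/2. That is, there do not exist a probabilistic encoding f: {0,1}² × R → {0,1} and probabilistic decoders V₁, V₂: {0,1} × R' → {0,1} such that for every x ∈ {0,1}² and every i ∈ {1,2}, Prob[V_i(f(x,r),r') = x_i] > 1/2. -/
import Mathlib


/-- No classical (2,1,p) random access encoding exists for any p > 1/2:
for any probabilistic encoder f of a 2-bit string into 1 bit and any
probabilistic decoders V₁, V₂, it cannot be that every bit of every string
is decoded correctly with probability exceeding 1/2. -/
theorem no_two_into_one_classical_encoding
    (R R' : Type) [Fintype R] [Fintype R']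
    (μ : R → ℝ) (μ' : R' → ℝ)
    (hμ0 : ∀ r, 0 ≤ μ r) (hμ1 : ∑ r, μ r = 1)
    (hμ'0 : ∀ r', 0 ≤ μ' r') (hμ'1 : ∑ r', μ' r' = 1)
    (f : Bool × Bool → R → Bool)
    (V : Fin 2 → Bool → R' → Bool) :
    ¬ (∀ (x : Bool × Bool) (i : Fin 2),
        1 / 2 < ∑ r : R, ∑ r' : R',
          (if V i (f x r) r' = (if i = 0 then x.1 else x.2)
            then μ r * μ' r' else 0)) := by
  intro h
  set Q : Fin 2 → Bool → Bool → ℝ :=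
    fun i b t => ∑ r', if V i b r' = t then μ' r' else 0 with hQ
  set A : Bool × Bool → ℝ := fun x => ∑ r, if f x r then μ r else 0 with hA
  have key : ∀ (x : Bool × Bool) (i : Fin 2) (t : Bool),
      (∑ r : R, ∑ r' : R', (if V i (f x r) r' = t then μ r * μ' r' else 0))
        = A x * Q i true t + (1 - A x) * Q i false t := by
    intro x i t
    have h1 : ∀ r : R, (∑ r' : R', (if V i (f x r) r' = t then μ r * μ' r' else 0))
        = μ r * Q i (f x r) t := by
      intro r
      rw [hQ]
      rw [Finset.mul_sum]
      refine Finset.sum_congr rfl fun r' _ => ?_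
      split <;> simp
    have h2 : ∀ r : R, μ r * Q i (f x r) t
        = (if f x r then μ r else 0) * Q i true t
          + (if f x r then 0 else μ r) * Q i false t := by
      intro r; by_cases hf : f x r <;> simp [hf]
    calc (∑ r : R, ∑ r' : R', (if V i (f x r) r' = t then μ r * μ' r' else 0))
        = ∑ r : R, ((if f x r then μ r else 0) * Q i true t
            + (if f x r then 0 else μ r) * Q i false t) := by
          refine Finset.sum_congr rfl fun r _ => ?_
          rw [h1 r, h2 r]
      _ = (∑ r : R, if f x r then μ r else 0) * Q i true t
            + (∑ r : R, if f x r then 0 else μ r) * Q i false t := by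
          rw [Finset.sum_add_distrib, Finset.sum_mul, Finset.sum_mul]
      _ = A x * Q i true t + (1 - A x) * Q i false t := by
          have hc : (∑ r : R, if f x r then (0:ℝ) else μ r) = 1 - A x := by
            rw [hA, ← hμ1, ← Finset.sum_sub_distrib]
            refine Finset.sum_congr rfl fun r _ => ?_
            split <;> ring
          rw [hc, hA]
  have hcomp : ∀ (i : Fin 2) (b : Bool), Q i b false = 1 - Q i b true := by
    intro i b
    have : (∑ r', if V i b r' = false then μ' r' else 0)
        + (∑ r', if V i b r' = true then μ' r' else 0) = 1 := by
      rw [← Finset.sum_add_distrib, ← hμ'1]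
      refine Finset.sum_congr rfl fun r' _ => ?_
      cases hV : V i b r' <;> simp
    rw [hQ]; linarith [this]
  -- abbreviations
  set a11 := A (true, true)
  set a10 := A (true, false)
  set a01 := A (false, true)
  set a00 := A (false, false)
  set B0 := Q 0 false true
  set D0 := Q 0 true true - Q 0 false true
  set B1 := Q 1 false true
  set D1 := Q 1 true true - Q 1 false true
  -- extract the eight inequalities
  have e10_0 := h (true, false) 0
  have e10_1 := h (true, false) 1
  have e01_0 := h (false, true) 0
  have e01_1 := h (false, true) 1
  have e11_0 := h (true, true) 0
  have e11_1 := h (true, true) 1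
  have e00_0 := h (false, false) 0
  have e00_1 := h (false, false) 1
  simp only [show ((0:Fin 2) = 0) = True by simp, show ((1:Fin 2) = 0) = False by decide,
    if_true, if_false, key, hcomp] at e10_0 e10_1 e01_0 e01_1 e11_0 e11_1 e00_0 e00_1
  -- now each hypothesis is of the form 1/2 < a * Q i true t + (1-a) * Q i false t
  -- derive sign facts
  have s1 : (a10 - a01) * D0 > 0 := by nlinarith [e10_0, e01_0]
  have s2 : (a01 - a10) * D1 > 0 := by nlinarith [e01_1, e10_1]
  have s3 : (a11 - a00) * D0 > 0 := by nlinarith [e11_0, e00_0]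
  have s4 : (a11 - a00) * D1 > 0 := by nlinarith [e11_1, e00_1]
  nlinarith [mul_pos s1 s2, mul_pos s3 s4, sq_nonneg (a10 - a01), sq_nonneg (a11 - a00)]
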